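/- Let V, W, Z be finite-dimensional real vector spaces equipped with generalized complex structures, and let Γ ⊆ V ⊕ W and Φ ⊆ W ⊕ Z be subspaces. If Γ and Φ are generalized coisotropic with respect to the twisted product structures on V ⊕ W and W ⊕ Z respectively, then the composition Φ∘Γ = {(v,z) ∈ V ⊕ Z : ∃ w ∈ W with (v,w) ∈ Γ and (w,z) ∈ Φ} is a generalized coisotropic subspace of V ⊕ Z with respect to the twisted product structure. -/

import Mathlib

open Module LinearMap

noncomputable def gcPair (V : Type*) [AddCommGroup V] [Module ℝ V]
    (x y : V × Module.Dual ℝ V) : ℝ :=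
  -(1/2) * (x.2 y.1 + y.2 x.1)

noncomputable def IsGCS (V : Type*) [AddCommGroup V] [Module ℝ V]
    (J : (V × Module.Dual ℝ V) →ₗ[ℝ] (V × Module.Dual ℝ V)) : Prop :=
  J ∘ₗ J = -LinearMap.id ∧ ∀ x y, gcPair V (J x) (J y) = gcPair V x y

section Blocks

variable (V : Type*) [AddCommGroup V] [Module ℝ V]

noncomputable def blk1 (J : (V × Module.Dual ℝ V) →ₗ[ℝ] (V × Module.Dual ℝ V)) :
    V →ₗ[ℝ] V :=
  (LinearMap.fst ℝ V (Module.Dual ℝ V)) ∘ₗ J ∘ₗ (LinearMap.inl ℝ V (Module.Dual ℝ V))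

noncomputable def blk2 (J : (V × Module.Dual ℝ V) →ₗ[ℝ] (V × Module.Dual ℝ V)) :
    Module.Dual ℝ V →ₗ[ℝ] V :=
  (LinearMap.fst ℝ V (Module.Dual ℝ V)) ∘ₗ J ∘ₗ (LinearMap.inr ℝ V (Module.Dual ℝ V))

noncomputable def blk3 (J : (V × Module.Dual ℝ V) →ₗ[ℝ] (V × Module.Dual ℝ V)) :
    V →ₗ[ℝ] Module.Dual ℝ V :=
  (LinearMap.snd ℝ V (Module.Dual ℝ V)) ∘ₗ J ∘ₗ (LinearMap.inl ℝ V (Module.Dual ℝ V))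

noncomputable def blk4 (J : (V × Module.Dual ℝ V) →ₗ[ℝ] (V × Module.Dual ℝ V)) :
    Module.Dual ℝ V →ₗ[ℝ] Module.Dual ℝ V :=
  (LinearMap.snd ℝ V (Module.Dual ℝ V)) ∘ₗ J ∘ₗ (LinearMap.inr ℝ V (Module.Dual ℝ V))

noncomputable def ofBlocks (A : V →ₗ[ℝ] V) (B : Module.Dual ℝ V →ₗ[ℝ] V)
    (C : V →ₗ[ℝ] Module.Dual ℝ V) (D : Module.Dual ℝ V →ₗ[ℝ] Module.Dual ℝ V) :
    (V × Module.Dual ℝ V) →ₗ[ℝ] (V × Module.Dual ℝ V) :=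
  LinearMap.prod
    (A ∘ₗ LinearMap.fst ℝ V (Module.Dual ℝ V) + B ∘ₗ LinearMap.snd ℝ V (Module.Dual ℝ V))
    (C ∘ₗ LinearMap.fst ℝ V (Module.Dual ℝ V) + D ∘ₗ LinearMap.snd ℝ V (Module.Dual ℝ V))

/-- The twist `𝓙̃ = [[𝓙₁,-𝓙₂],[-𝓙₃,𝓙₄]]` of `𝓙`. -/
noncomputable def gcTwist (J : (V × Module.Dual ℝ V) →ₗ[ℝ] (V × Module.Dual ℝ V)) :
    (V × Module.Dual ℝ V) →ₗ[ℝ] (V × Module.Dual ℝ V) :=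
  ofBlocks V (blk1 V J) (-(blk2 V J)) (-(blk3 V J)) (blk4 V J)

end Blocks

section Prod

variable (U V : Type*) [AddCommGroup U] [Module ℝ U] [AddCommGroup V] [Module ℝ V]

/-- The natural identification `(U⊕V) ⊕ (U⊕V)* ≅ (U ⊕ U*) ⊕ (V ⊕ V*)`. -/
noncomputable def prodPack :
    ((U × V) × Module.Dual ℝ (U × V)) ≃ₗ[ℝ]
      (U × Module.Dual ℝ U) × (V × Module.Dual ℝ V) :=
  ((LinearEquiv.refl ℝ (U × V)).prodCongr (Module.dualProdDualEquivDual ℝ U V).symm).trans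
    (LinearEquiv.prodProdProdComm ℝ U V (Module.Dual ℝ U) (Module.Dual ℝ V))

/-- The direct sum of the structures `J_U` and `J_V` on `U ⊕ V`. -/
noncomputable def directSum
    (JU : (U × Module.Dual ℝ U) →ₗ[ℝ] (U × Module.Dual ℝ U))
    (JV : (V × Module.Dual ℝ V) →ₗ[ℝ] (V × Module.Dual ℝ V)) :
    ((U × V) × Module.Dual ℝ (U × V)) →ₗ[ℝ] ((U × V) × Module.Dual ℝ (U × V)) :=
  (prodPack U V).symm.toLinearMap ∘ₗ (LinearMap.prodMap JU JV) ∘ₗ (prodPack U V).toLinearMap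

/-- The twisted product structure on `U ⊕ V`: the direct sum of `𝓙̃_U` and `𝓙_V`. -/
noncomputable def twistedProd
    (JU : (U × Module.Dual ℝ U) →ₗ[ℝ] (U × Module.Dual ℝ U))
    (JV : (V × Module.Dual ℝ V) →ₗ[ℝ] (V × Module.Dual ℝ V)) :
    ((U × V) × Module.Dual ℝ (U × V)) →ₗ[ℝ] ((U × V) × Module.Dual ℝ (U × V)) :=
  directSum U V (gcTwist U JU) JV

end Prod

section Subspaces

variable {X : Type*} [AddCommGroup X] [Module ℝ X]

/-- A subspace `Γ` of a GC vector space `(X, J)` is generalized isotropic if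
`J(Γ ⊕ 0) ⊆ Γ ⊕ Ann(Γ)`. -/
def GenIsotropic (J : (X × Module.Dual ℝ X) →ₗ[ℝ] (X × Module.Dual ℝ X))
    (Γ : Submodule ℝ X) : Prop :=
  ∀ x ∈ Γ, J (x, 0) ∈ Γ.prod Γ.dualAnnihilator

/-- A subspace `Γ` of a GC vector space `(X, J)` is generalized coisotropic if
`J(0 ⊕ Ann(Γ)) ⊆ Γ ⊕ Ann(Γ)`. -/
def GenCoisotropic (J : (X × Module.Dual ℝ X) →ₗ[ℝ] (X × Module.Dual ℝ X))
    (Γ : Submodule ℝ X) : Prop :=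
  ∀ f ∈ Γ.dualAnnihilator, J (0, f) ∈ Γ.prod Γ.dualAnnihilator

/-- A subspace `Γ` of a GC vector space `(X, J)` is generalized Lagrangian if
`Γ ⊕ Ann(Γ)` is stable under `J`. -/
def GenLagrangian (J : (X × Module.Dual ℝ X) →ₗ[ℝ] (X × Module.Dual ℝ X))
    (Γ : Submodule ℝ X) : Prop :=
  ∀ p ∈ Γ.prod Γ.dualAnnihilator, J p ∈ Γ.prod Γ.dualAnnihilator

end Subspaces

section Comp

variable {V W Z : Type*} [AddCommGroup V] [Module ℝ V] [AddCommGroup W] [Module ℝ W]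
  [AddCommGroup Z] [Module ℝ Z]

/-- The composition `Φ∘Γ = {(v,z) : ∃ w, (v,w) ∈ Γ ∧ (w,z) ∈ Φ}` of linear relations. -/
def relComp (Γ : Submodule ℝ (V × W)) (Φ : Submodule ℝ (W × Z)) : Submodule ℝ (V × Z) where
  carrier := {p | ∃ w : W, (p.1, w) ∈ Γ ∧ (w, p.2) ∈ Φ}
  add_mem' := by
    rintro ⟨a, c⟩ ⟨a', c'⟩ ⟨w, h1, h2⟩ ⟨w', h1', h2'⟩
    exact ⟨w + w', Γ.add_mem h1 h1', Φ.add_mem h2 h2'⟩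
  zero_mem' := ⟨0, Γ.zero_mem, Φ.zero_mem⟩
  smul_mem' := by
    rintro r ⟨a, c⟩ ⟨w, h1, h2⟩
    exact ⟨r • w, Γ.smul_mem r h1, Φ.smul_mem r h2⟩

end Comp

section MyAux

variable {U V : Type*} [AddCommGroup U] [Module ℝ U] [AddCommGroup V] [Module ℝ V]

lemma my_coprod_inl_inr (f : Module.Dual ℝ (U × V)) :
    (f ∘ₗ LinearMap.inl ℝ U V).coprod (f ∘ₗ LinearMap.inr ℝ U V) = f := by
  ext <;> simp

lemma prodPack_coprod (x : U) (y : V) (g : Module.Dual ℝ U) (h : Module.Dual ℝ V) :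
    prodPack U V ((x, y), g.coprod h) = ((x, g), (y, h)) := by
  simp [prodPack, LinearEquiv.prodProdProdComm, LinearEquiv.symm_apply_eq]
  rfl

lemma twistedProd_zero_coprod
    (JU : (U × Module.Dual ℝ U) →ₗ[ℝ] (U × Module.Dual ℝ U))
    (JV : (V × Module.Dual ℝ V) →ₗ[ℝ] (V × Module.Dual ℝ V))
    (a : Module.Dual ℝ U) (b : Module.Dual ℝ V) :
    twistedProd U V JU JV (0, a.coprod b) =
      ((-(JU (0, a)).1, (JV (0, b)).1), ((JU (0, a)).2).coprod ((JV (0, b)).2)) := by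
  have h2 : gcTwist U JU (0, a) = (-(JU (0, a)).1, (JU (0, a)).2) := by
    simp [gcTwist, ofBlocks, blk1, blk2, blk3, blk4, show JU (0, 0) = 0 from map_zero JU]
  rw [show ((0 : U × V), a.coprod b) = (((0 : U), (0 : V)), a.coprod b) from rfl]
  simp only [twistedProd, directSum, LinearMap.comp_apply, LinearEquiv.coe_coe,
    prodPack_coprod, LinearMap.prodMap_apply, h2]
  rw [LinearEquiv.symm_apply_eq, prodPack_coprod]


lemma exists_mediating {V W Z : Type*} [AddCommGroup V] [Module ℝ V]
    [AddCommGroup W] [Module ℝ W] [AddCommGroup Z] [Module ℝ Z]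
    (Γ : Submodule ℝ (V × W)) (Φ : Submodule ℝ (W × Z))
    (f : Module.Dual ℝ (V × Z)) (hf : f ∈ (relComp Γ Φ).dualAnnihilator) :
    ∃ β : Module.Dual ℝ W,
      (f ∘ₗ LinearMap.inl ℝ V Z).coprod β ∈ Γ.dualAnnihilator ∧
      (-β).coprod (f ∘ₗ LinearMap.inr ℝ V Z) ∈ Φ.dualAnnihilator := by
  classical
  set X := (V × W) × (W × Z)
  let q : X →ₗ[ℝ] V × Z :=
    ((LinearMap.fst ℝ V W) ∘ₗ (LinearMap.fst ℝ (V × W) (W × Z))).prod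
      ((LinearMap.snd ℝ W Z) ∘ₗ (LinearMap.snd ℝ (V × W) (W × Z)))
  let hmap : X →ₗ[ℝ] W :=
    (LinearMap.snd ℝ V W) ∘ₗ (LinearMap.fst ℝ (V × W) (W × Z)) -
      (LinearMap.fst ℝ W Z) ∘ₗ (LinearMap.snd ℝ (V × W) (W × Z))
  set S : Submodule ℝ X := Γ.prod Φ
  set D : Submodule ℝ X := LinearMap.ker hmap
  have hmapD : ∀ (v : V) (w : W) (z : Z), (((v, w), (w, z)) : X) ∈ D := by
    intro v w z
    simp only [D, LinearMap.mem_ker, hmap, LinearMap.sub_apply, LinearMap.comp_apply,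
      LinearMap.fst_apply, LinearMap.snd_apply, sub_self]
  have key : f ∘ₗ q ∈ (S ⊓ D).dualAnnihilator := by
    rw [Submodule.mem_dualAnnihilator]
    rintro ⟨⟨v, w⟩, ⟨w', z⟩⟩ ⟨hS, hDm⟩
    have h0 : hmap ((v, w), (w', z)) = 0 := hDm
    simp only [hmap, LinearMap.sub_apply, LinearMap.comp_apply, LinearMap.fst_apply,
      LinearMap.snd_apply, sub_eq_zero] at h0
    have h0' : w = w' := h0
    have hmem : (v, z) ∈ relComp Γ Φ := ⟨w, hS.1, h0' ▸ hS.2⟩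
    exact (Submodule.mem_dualAnnihilator f).mp hf _ hmem
  rw [Subspace.dualAnnihilator_inf_eq] at key
  obtain ⟨g, hg, h', hh', hsum⟩ := Submodule.mem_sup.mp key
  rw [Submodule.mem_dualAnnihilator] at hg hh'
  set β : Module.Dual ℝ W :=
    h' ∘ₗ (LinearMap.inr ℝ (V × W) (W × Z)) ∘ₗ (LinearMap.inl ℝ W Z) with hβ
  have hβapp : ∀ b : W, β b = h' ((((0, 0), (b, 0))) : X) := fun b => rfl
  have hsumapp : ∀ x : X, g x + h' x = f (q x) := by
    intro x
    have := congrArg (fun F : Module.Dual ℝ X => F x) hsum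
    simpa using this
  refine ⟨β, ?_, ?_⟩
  · rw [Submodule.mem_dualAnnihilator]
    rintro ⟨a, b⟩ hab
    have h1 : g (((a, b), (0, 0)) : X) = 0 := hg _ ⟨hab, Φ.zero_mem⟩
    have hD : h' (((a, b), (b, 0)) : X) = 0 := hh' _ (hmapD a b 0)
    have hsplit : (((a, b), (b, 0)) : X) = ((a, b), (0, 0)) + ((0, 0), (b, 0)) := by simp
    rw [hsplit, map_add] at hD
    have h3 := hsumapp (((a, b), (0, 0)) : X)
    have hq : f (q (((a, b), (0, 0)) : X)) = f (a, 0) := rfl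
    rw [hq, h1, zero_add] at h3
    show (f ∘ₗ LinearMap.inl ℝ V Z) a + β b = 0
    have hfa : (f ∘ₗ LinearMap.inl ℝ V Z) a = f (a, 0) := rfl
    rw [hfa, hβapp]
    linarith
  · rw [Submodule.mem_dualAnnihilator]
    rintro ⟨a, b⟩ hab
    have h1 : g (((0, 0), (a, b)) : X) = 0 := hg _ ⟨Γ.zero_mem, hab⟩
    have hD : h' (((0, a), (a, b)) : X) = 0 := hh' _ (hmapD 0 a b)
    have hD2 : h' (((0, a), (a, 0)) : X) = 0 := hh' _ (hmapD 0 a 0)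
    have hsplit : (((0, a), (a, b)) : X) = ((0, a), (0, 0)) + ((0, 0), (a, b)) := by simp
    have hsplit2 : (((0, a), (a, 0)) : X) = ((0, a), (0, 0)) + ((0, 0), (a, 0)) := by simp
    rw [hsplit, map_add] at hD
    rw [hsplit2, map_add] at hD2
    have h3 := hsumapp (((0, 0), (a, b)) : X)
    have hq : f (q (((0, 0), (a, b)) : X)) = f (0, b) := rfl
    rw [hq, h1, zero_add] at h3
    show (-β) a + (f ∘ₗ LinearMap.inr ℝ V Z) b = 0
    have hfb : (f ∘ₗ LinearMap.inr ℝ V Z) b = f (0, b) := rfl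
    rw [hfb, LinearMap.neg_apply, hβapp]
    linarith

end MyAux

theorem relComp_genCoisotropic
    (V W Z : Type*) [AddCommGroup V] [Module ℝ V] [FiniteDimensional ℝ V]
    [AddCommGroup W] [Module ℝ W] [FiniteDimensional ℝ W]
    [AddCommGroup Z] [Module ℝ Z] [FiniteDimensional ℝ Z]
    (JV : (V × Module.Dual ℝ V) →ₗ[ℝ] (V × Module.Dual ℝ V))
    (JW : (W × Module.Dual ℝ W) →ₗ[ℝ] (W × Module.Dual ℝ W))
    (JZ : (Z × Module.Dual ℝ Z) →ₗ[ℝ] (Z × Module.Dual ℝ Z))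
    (hJV : IsGCS V JV) (hJW : IsGCS W JW) (hJZ : IsGCS Z JZ)
    (Γ : Submodule ℝ (V × W)) (Φ : Submodule ℝ (W × Z))
    (hΓ : GenCoisotropic (twistedProd V W JV JW) Γ)
    (hΦ : GenCoisotropic (twistedProd W Z JW JZ) Φ) :
    GenCoisotropic (twistedProd V Z JV JZ) (relComp Γ Φ) := by
  intro f hf
  obtain ⟨β, hβΓ, hβΦ⟩ := exists_mediating Γ Φ f hf
  set α := f ∘ₗ LinearMap.inl ℝ V Z with hα
  set γ := f ∘ₗ LinearMap.inr ℝ V Z with hγ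
  have hfc : α.coprod γ = f := my_coprod_inl_inr f
  have H1 := hΓ _ hβΓ
  have H2 := hΦ _ hβΦ
  rw [twistedProd_zero_coprod] at H1 H2
  rw [← hfc, twistedProd_zero_coprod]
  have hneg : ((0 : W), -β) = -(((0 : W), β)) := by simp
  rw [hneg, map_neg] at H2
  rw [Submodule.mem_prod] at H1 H2 ⊢
  obtain ⟨H1a, H1b⟩ := H1
  obtain ⟨H2a, H2b⟩ := H2
  simp only [Prod.fst_neg, Prod.snd_neg, neg_neg] at H2a H2b
  constructor
  · exact ⟨(JW (0, β)).1, H1a, H2a⟩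
  · rw [Submodule.mem_dualAnnihilator]
    rintro ⟨v, z⟩ ⟨w, hvw, hwz⟩
    have e1 := (Submodule.mem_dualAnnihilator _).mp H1b _ hvw
    have e2 := (Submodule.mem_dualAnnihilator _).mp H2b _ hwz
    simp only [LinearMap.coprod_apply, LinearMap.neg_apply] at e1 e2 ⊢
    linarith
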